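/- Let n be even, m = n/d with d even, and f : ZMod n → {-1,0,1}. Suppose the support of f is invariant under translation by m and the number of elements of the support within any m consecutive indices is odd, and the nonzero values of f alternate in sign around the cycle. Then f(a + m) = -f(a) for all a. -/

import Mathlib

theorem rotational_footprint_odd_count_implies_skewed (n : ℕ) (hn : Even n) (hpos : 0 < n)
    (d m : ℕ) (hd : Even d) (hm : m = n / d) (hdm : d * m = n) (f : ZMod n → ℤ)
    (hvals : ∀ a : ZMod n, f a ∈ ({-1, 0, 1} : Set ℤ))
    (hsupp : ∀ a : ZMod n, f a ≠ 0 ↔ f (a + (m : ZMod n)) ≠ 0)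
    (hodd : ∀ b : ZMod n,
      Odd (((Finset.range m).filter (fun i : ℕ => f (b + (i : ZMod n)) ≠ 0)).card))
    (halt : ∀ (a : ZMod n) (t : ℕ), 0 < t → f a ≠ 0 → f (a + (t : ZMod n)) ≠ 0 →
      (∀ j : ℕ, 0 < j → j < t → f (a + (j : ZMod n)) = 0) →
      f a = -f (a + (t : ZMod n))) :
    ∀ a : ZMod n, f (a + (m : ZMod n)) = -f a := by
  have key : ∀ t : ℕ, ∀ a : ZMod n, 0 < t → f a ≠ 0 → f (a + (t : ZMod n)) ≠ 0 →
      f (a + (t : ZMod n)) =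
        (-1) ^ (((Finset.Ioo 0 t).filter (fun j : ℕ => f (a + (j : ZMod n)) ≠ 0)).card + 1)
          * f a := by
    intro t
    induction t using Nat.strong_induction_on with
    | _ t ih =>
      intro a ht ha hat
      by_cases hne : ((Finset.Ioo 0 t).filter (fun j : ℕ => f (a + (j : ZMod n)) ≠ 0)).Nonempty
      · obtain ⟨j0, hj0mem, hj0min⟩ := Finset.exists_min_image _ id hne
        simp only [Finset.mem_filter, Finset.mem_Ioo] at hj0mem
        obtain ⟨⟨hj0pos, hj0lt⟩, hj0ne⟩ := hj0mem
        have hmin : ∀ j : ℕ, 0 < j → j < j0 → f (a + (j : ZMod n)) = 0 := by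
          intro j hjpos hjlt
          by_contra hjz
          have := hj0min j (by
            simp only [Finset.mem_filter, Finset.mem_Ioo]
            exact ⟨⟨hjpos, lt_trans hjlt hj0lt⟩, hjz⟩)
          simp only [id] at this
          omega
        have hstep : f a = -f (a + (j0 : ZMod n)) := halt a j0 hj0pos ha hj0ne hmin
        have ht' : 0 < t - j0 := by omega
        have hcastsub : ∀ j : ℕ, j0 ≤ j →
            (a + (j0 : ZMod n)) + ((j - j0 : ℕ) : ZMod n) = a + (j : ZMod n) := by
          intro j hj
          have : ((j - j0 : ℕ) : ZMod n) = (j : ZMod n) - (j0 : ZMod n) := by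
            rw [Nat.cast_sub hj]
          rw [this]; ring
        have hat' : f ((a + (j0 : ZMod n)) + ((t - j0 : ℕ) : ZMod n)) ≠ 0 := by
          rw [hcastsub t (le_of_lt hj0lt)]; exact hat
        have IH := ih (t - j0) (by omega) (a + (j0 : ZMod n)) ht' hj0ne hat'
        -- card of shifted window equals card over Ioo j0 t
        have hbij : ((Finset.Ioo 0 (t - j0)).filter
              (fun j : ℕ => f ((a + (j0 : ZMod n)) + (j : ZMod n)) ≠ 0)).card
            = ((Finset.Ioo j0 t).filter (fun j : ℕ => f (a + (j : ZMod n)) ≠ 0)).card := by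
          refine Finset.card_nbij' (fun j => j + j0) (fun j => j - j0) ?_ ?_ ?_ ?_
          · intro j hj
            simp only [Finset.mem_coe, Finset.mem_filter, Finset.mem_Ioo] at hj ⊢
            refine ⟨⟨by omega, by omega⟩, ?_⟩
            have := hcastsub (j + j0) (by omega)
            rw [show j + j0 - j0 = j from by omega] at this
            rw [← this]; exact hj.2
          · intro j hj
            simp only [Finset.mem_coe, Finset.mem_filter, Finset.mem_Ioo] at hj ⊢
            refine ⟨⟨by omega, by omega⟩, ?_⟩
            rw [hcastsub j (le_of_lt hj.1.1)]
            exact hj.2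
          · intro j hj; simp only []; omega
          · intro j hj
            simp only [Finset.mem_coe, Finset.mem_filter, Finset.mem_Ioo] at hj
            simp only []; omega
        have hsplit : ((Finset.Ioo 0 t).filter (fun j : ℕ => f (a + (j : ZMod n)) ≠ 0))
            = insert j0 ((Finset.Ioo j0 t).filter (fun j : ℕ => f (a + (j : ZMod n)) ≠ 0)) := by
          ext j
          simp only [Finset.mem_filter, Finset.mem_Ioo, Finset.mem_insert]
          constructor
          · rintro ⟨⟨hj1, hj2⟩, hj3⟩
            rcases eq_or_ne j j0 with h | h
            · exact Or.inl h
            · refine Or.inr ⟨⟨?_, hj2⟩, hj3⟩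
              have := hj0min j (by
                simp only [Finset.mem_filter, Finset.mem_Ioo]
                exact ⟨⟨hj1, hj2⟩, hj3⟩)
              simp only [id] at this
              omega
          · rintro (rfl | ⟨⟨hj1, hj2⟩, hj3⟩)
            · exact ⟨⟨hj0pos, hj0lt⟩, hj0ne⟩
            · exact ⟨⟨by omega, hj2⟩, hj3⟩
        have hcard : ((Finset.Ioo 0 t).filter (fun j : ℕ => f (a + (j : ZMod n)) ≠ 0)).card
            = ((Finset.Ioo 0 (t - j0)).filter
                (fun j : ℕ => f ((a + (j0 : ZMod n)) + (j : ZMod n)) ≠ 0)).card + 1 := by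
          rw [hsplit, Finset.card_insert_of_notMem (by
            simp only [Finset.mem_filter, Finset.mem_Ioo]; omega), hbij]
        rw [← hcastsub t (le_of_lt hj0lt)]
        rw [IH, hcard, hstep]
        ring
      · rw [Finset.not_nonempty_iff_eq_empty] at hne
        rw [hne]
        have := halt a t ht ha hat (by
          intro j hjpos hjlt
          by_contra hjz
          have : j ∈ (Finset.Ioo 0 t).filter (fun j : ℕ => f (a + (j : ZMod n)) ≠ 0) := by
            simp only [Finset.mem_filter, Finset.mem_Ioo]
            exact ⟨⟨hjpos, hjlt⟩, hjz⟩
          rw [hne] at this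
          exact absurd this (Finset.notMem_empty j))
        simp only [Finset.card_empty, zero_add, pow_one]
        linarith
  intro a
  by_cases ha : f a = 0
  · have : ¬ f (a + (m : ZMod n)) ≠ 0 := fun h => ((hsupp a).mpr h) ha
    push_neg at this
    rw [this, ha, neg_zero]
  · have hm0 : 0 < m := by
      rcases Nat.eq_zero_or_pos m with h | h
      · subst h; simp at hdm; omega
      · exact h
    have ham : f (a + (m : ZMod n)) ≠ 0 := (hsupp a).mp ha
    -- parity of the count strictly between
    have h1 : ((Finset.range m).filter (fun i : ℕ => f ((a + 1) + (i : ZMod n)) ≠ 0)).card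
        = ((Finset.Ioc 0 m).filter (fun j : ℕ => f (a + (j : ZMod n)) ≠ 0)).card := by
      refine Finset.card_nbij' (fun i => i + 1) (fun j => j - 1) ?_ ?_ ?_ ?_
      · intro i hi
        simp only [Finset.mem_coe, Finset.mem_filter, Finset.mem_range, Finset.mem_Ioc] at hi ⊢
        refine ⟨⟨by omega, by omega⟩, ?_⟩
        have : ((i + 1 : ℕ) : ZMod n) = (i : ZMod n) + 1 := by push_cast; ring
        rw [this, show a + ((i : ZMod n) + 1) = (a + 1) + (i : ZMod n) from by ring]
        exact hi.2
      · intro j hj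
        simp only [Finset.mem_coe, Finset.mem_filter, Finset.mem_range, Finset.mem_Ioc] at hj ⊢
        refine ⟨by omega, ?_⟩
        have h2 : ((j - 1 : ℕ) : ZMod n) = (j : ZMod n) - 1 := by
          rw [Nat.cast_sub hj.1.1]; push_cast; ring
        rw [h2, show (a + 1) + ((j : ZMod n) - 1) = a + (j : ZMod n) from by ring]
        exact hj.2
      · intro i hi; simp only []; omega
      · intro j hj
        simp only [Finset.mem_coe, Finset.mem_filter, Finset.mem_Ioc] at hj
        simp only []; omega
    have hsplit2 : ((Finset.Ioc 0 m).filter (fun j : ℕ => f (a + (j : ZMod n)) ≠ 0))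
        = insert m ((Finset.Ioo 0 m).filter (fun j : ℕ => f (a + (j : ZMod n)) ≠ 0)) := by
      ext j
      simp only [Finset.mem_filter, Finset.mem_Ioc, Finset.mem_Ioo, Finset.mem_insert]
      constructor
      · rintro ⟨⟨hj1, hj2⟩, hj3⟩
        rcases eq_or_ne j m with h | h
        · exact Or.inl h
        · exact Or.inr ⟨⟨hj1, lt_of_le_of_ne hj2 h⟩, hj3⟩
      · rintro (rfl | ⟨⟨hj1, hj2⟩, hj3⟩)
        · exact ⟨⟨hm0, le_refl _⟩, ham⟩
        · exact ⟨⟨hj1, le_of_lt hj2⟩, hj3⟩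
    have hodd' := hodd (a + 1)
    rw [h1, hsplit2, Finset.card_insert_of_notMem (by
      simp only [Finset.mem_filter, Finset.mem_Ioo]; omega)] at hodd'
    have heven : Even (((Finset.Ioo 0 m).filter (fun j : ℕ => f (a + (j : ZMod n)) ≠ 0)).card) := by
      rcases hodd' with ⟨k, hk⟩
      exact ⟨k, by omega⟩
    have := key m a hm0 ha ham
    rw [this]
    rcases heven with ⟨k, hk⟩
    rw [hk, show k + k + 1 = 2 * k + 1 from by ring, pow_succ, pow_mul]
    norm_num
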